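/- For every integer m with 1 ≤ m ≤ 199, P(X_{2m} < 0 | X_2 < 0) = 1/2 + (1/2^{2m-1}) · C(2m-2, m-1), where C(2m-2, m-1) is the binomial coefficient and the conditioning event X_2 < 0 has probability 1/4 > 0. -/

import Mathlib

lemma real_key (m a c : ℕ) (hm : m ≤ 199) (hac : a + c = 2 * m) :
    1 < (1.01 : ℝ) ^ a * 0.99 ^ c ↔ m + 1 ≤ a := by
  constructor
  · intro h
    by_contra hlt
    have ha : a ≤ c := by omega
    have : (1.01 : ℝ) ^ a * 0.99 ^ c = (1.01 * 0.99) ^ a * 0.99 ^ (c - a) := by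
      rw [mul_pow, mul_assoc, ← pow_add]
      congr 2
      omega
    rw [this] at h
    have h1 : ((1.01 : ℝ) * 0.99) ^ a ≤ 1 := pow_le_one₀ (by norm_num) (by norm_num)
    have h2 : (0.99 : ℝ) ^ (c - a) ≤ 1 := pow_le_one₀ (by norm_num) (by norm_num)
    have h3 : (0 : ℝ) ≤ ((1.01 : ℝ) * 0.99) ^ a := by positivity
    have := mul_le_one₀ h1 (by positivity : (0:ℝ) ≤ (0.99:ℝ) ^ (c - a)) h2
    linarith
  · intro ha
    have hc : c ≤ 198 := by omega
    have h2 : c + 2 ≤ a := by omega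
    calc (1:ℝ) < 1.01 ^ 2 * 0.9999 ^ 198 := by norm_num
      _ ≤ 1.01 ^ 2 * 0.9999 ^ c :=
          mul_le_mul_of_nonneg_left
            (pow_le_pow_of_le_one (by norm_num) (by norm_num) hc) (by positivity)
      _ = 1.01 ^ (c + 2) * 0.99 ^ c := by
          rw [pow_add]
          have : (0.9999 : ℝ) = 1.01 * 0.99 := by norm_num
          rw [this, mul_pow]; ring
      _ ≤ 1.01 ^ a * 0.99 ^ c :=
          mul_le_mul_of_nonneg_right
            (pow_le_pow_right₀ (by norm_num) h2) (by positivity)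

lemma sum_choose_half (m : ℕ) (hm : 1 ≤ m) :
    2 * ∑ k ∈ Finset.Icc (m - 1) (2 * m - 2), (2 * m - 2).choose k
      = 2 ^ (2 * m - 2) + (2 * m - 2).choose (m - 1) := by
  set n := 2 * m - 2 with hn
  have h1 : ∑ k ∈ Finset.range (m - 1), n.choose k
      = ∑ k ∈ Finset.Ico m (n + 1), n.choose k := by
    apply Finset.sum_nbij' (fun k => n - k) (fun k => n - k)
    · intro k hk; simp only [Finset.mem_range] at hk; simp only [Finset.mem_Ico]; omega
    · intro k hk; simp only [Finset.mem_Ico] at hk; simp only [Finset.mem_range]; omega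
    · intro k hk; simp only [Finset.mem_range] at hk; omega
    · intro k hk; simp only [Finset.mem_Ico] at hk; omega
    · intro k hk
      simp only [Finset.mem_range] at hk
      rw [Nat.choose_symm (by omega)]
  have h2 : ∑ k ∈ Finset.range (m - 1), n.choose k
      + ∑ k ∈ Finset.Ico (m - 1) (n + 1), n.choose k
      = ∑ k ∈ Finset.range (n + 1), n.choose k := by
    simp only [Finset.range_eq_Ico]
    exact Finset.sum_Ico_consecutive _ (by omega) (by omega)
  have h3 : ∑ k ∈ Finset.Ico (m - 1) (n + 1), n.choose k
      = n.choose (m - 1) + ∑ k ∈ Finset.Ico m (n + 1), n.choose k := by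
    rw [Finset.sum_eq_sum_Ico_succ_bot (by omega : m - 1 < n + 1)]
    have : m - 1 + 1 = m := by omega
    rw [this]
  have h4 : ∑ k ∈ Finset.range (n + 1), n.choose k = 2 ^ n := Nat.sum_range_choose n
  have h5 : Finset.Icc (m - 1) n = Finset.Ico (m - 1) (n + 1) := by
    rw [Finset.Ico_add_one_right_eq_Icc]
  rw [h5]
  omega

open MeasureTheory ProbabilityTheory

lemma pattern_prob {Ω : Type*} [MeasureSpace Ω] [IsProbabilityMeasure (ℙ : Measure Ω)]
    (C : ℕ → Ω → ℝ) (hMeas : ∀ j, Measurable (C j))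
    (hIndep : iIndepFun C ℙ)
    (hHead : ∀ j, ℙ {ω | C j ω = 1} = 1/2)
    (hTail : ∀ j, ℙ {ω | C j ω = -1} = 1/2)
    (s : Finset ℕ) (E : Set Ω)
    (p : Finset ℕ → Prop) [DecidablePred p]
    (hiff : ∀ ω, (∀ j ∈ s, C j ω = 1 ∨ C j ω = -1) →
      (ω ∈ E ↔ p (s.filter (fun j => C j ω = -1)))) :
    ℙ E = ((s.powerset.filter p).card : ENNReal) * (1/2 : ENNReal) ^ s.card := by
  classical
  set A : Finset ℕ → Set Ω :=
    fun t => ⋂ j ∈ s, {ω | C j ω = if j ∈ t then -1 else 1} with hA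
  have hAmeas : ∀ t, MeasurableSet (A t) := by
    intro t
    apply MeasurableSet.biInter s.countable_toSet
    intro j _
    exact (hMeas j) (measurableSet_singleton _)
  have hAprob : ∀ t, ℙ (A t) = (1/2 : ENNReal) ^ s.card := by
    intro t
    have h : ℙ (A t) = ∏ j ∈ s, ℙ {ω | C j ω = if j ∈ t then -1 else 1} :=
      hIndep.meas_biInter (S := s)
        (s := fun j => {ω | C j ω = if j ∈ t then -1 else 1})
        (fun j _ => ⟨{if j ∈ t then -1 else 1}, measurableSet_singleton _, by ext ω; simp⟩)
    rw [h, Finset.prod_congr rfl (fun j _ => ?_), Finset.prod_const]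
    by_cases hjt : j ∈ t <;> simp only [hjt, if_true, if_false] <;>
      [exact hTail j; exact hHead j]
  set G : Set Ω := {ω | ∀ j ∈ s, C j ω = 1 ∨ C j ω = -1} with hG
  have hGnull : ℙ Gᶜ = 0 := by
    have hD : ∀ j, ℙ ({ω | C j ω = 1} ∪ {ω | C j ω = -1})ᶜ = 0 := by
      intro j
      have m1 : MeasurableSet {ω | C j ω = 1} := hMeas j (measurableSet_singleton 1)
      have m2 : MeasurableSet {ω | C j ω = -1} := hMeas j (measurableSet_singleton (-1))
      rw [prob_compl_eq_zero_iff (m1.union m2)]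
      rw [measure_union ?_ m2, hHead, hTail]
      · rw [ENNReal.add_halves]
      · rw [Set.disjoint_left]
        intro ω h1 h2
        simp only [Set.mem_setOf_eq] at h1 h2
        rw [h1] at h2; norm_num at h2
    have hsub : Gᶜ ⊆ ⋃ j ∈ s, ({ω | C j ω = 1} ∪ {ω | C j ω = -1})ᶜ := by
      intro ω hω
      simp only [hG, Set.mem_compl_iff, Set.mem_setOf_eq, not_forall] at hω
      obtain ⟨j, hj, hωj⟩ := hω
      refine Set.mem_biUnion hj ?_
      simp only [Set.mem_compl_iff, Set.mem_union, Set.mem_setOf_eq]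
      tauto
    have h0 : ℙ (⋃ j ∈ s, ({ω | C j ω = 1} ∪ {ω | C j ω = -1})ᶜ) = 0 :=
      (measure_biUnion_null_iff s.countable_toSet).2 fun j _ => hD j
    exact le_antisymm (h0 ▸ measure_mono hsub) zero_le
  have hGae : ∀ᵐ ω ∂ℙ, ω ∈ G := by
    rw [MeasureTheory.ae_iff]
    exact hGnull
  have hchar : ∀ ω ∈ G, ∀ t ∈ s.powerset,
      (ω ∈ A t ↔ t = s.filter (fun j => C j ω = -1)) := by
    intro ω hω t ht
    rw [Finset.mem_powerset] at ht
    constructor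
    · intro hωt
      ext j
      simp only [Finset.mem_filter]
      constructor
      · intro hjt
        have hjs := ht hjt
        have := Set.mem_iInter₂.mp hωt j hjs
        refine ⟨hjs, ?_⟩
        simpa [hjt] using this
      · rintro ⟨hjs, hcj⟩
        by_contra hjt
        have := Set.mem_iInter₂.mp hωt j hjs
        simp only [hjt, if_false, Set.mem_setOf_eq] at this
        rw [this] at hcj; norm_num at hcj
    · rintro rfl
      refine Set.mem_iInter₂.mpr fun j hjs => ?_
      by_cases h : C j ω = -1
      · simp [h, hjs]
      · have h1 : C j ω = 1 := (hω j hjs).resolve_right h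
        have hnot : j ∉ s.filter (fun j => C j ω = -1) := by simp [h]
        simp [hnot, h1]
  have hmemA : ∀ ω ∈ G, ω ∈ A (s.filter (fun j => C j ω = -1)) := by
    intro ω hω
    exact (hchar ω hω _ (Finset.mem_powerset.mpr (Finset.filter_subset _ _))).mpr rfl
  have hEU : ℙ E = ℙ (⋃ t ∈ s.powerset.filter p, A t) := by
    apply measure_congr
    rw [Filter.eventuallyEq_set]
    filter_upwards [hGae] with ω hω
    constructor
    · intro hE
      refine Set.mem_biUnion (Finset.mem_filter.mpr
        ⟨Finset.mem_powerset.mpr (Finset.filter_subset _ _), (hiff ω hω).mp hE⟩)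
        (hmemA ω hω)
    · intro hU
      obtain ⟨t, ht, hωt⟩ := Set.mem_iUnion₂.mp hU
      obtain ⟨htp, hpt⟩ := Finset.mem_filter.mp ht
      have := (hchar ω hω t htp).mp hωt
      exact (hiff ω hω).mpr (this ▸ hpt)
  have hdisj : Set.PairwiseDisjoint ↑(s.powerset.filter p) A := by
    intro t ht t' ht' hne
    rw [Finset.coe_filter, Set.mem_setOf_eq] at ht ht'
    rw [Function.onFun, Set.disjoint_left]
    intro ω hωt hωt'
    have hωG : ω ∈ G := by
      intro j hjs
      have := Set.mem_iInter₂.mp hωt j hjs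
      by_cases hjt : j ∈ t <;> simp only [hjt, if_true, if_false, Set.mem_setOf_eq] at this <;>
        [exact Or.inr this; exact Or.inl this]
    have e1 := (hchar ω hωG t ht.1).mp hωt
    have e2 := (hchar ω hωG t' ht'.1).mp hωt'
    exact hne (e1.trans e2.symm)
  rw [hEU, measure_biUnion_finset hdisj (fun t _ => hAmeas t)]
  rw [Finset.sum_congr rfl (fun t _ => hAprob t), Finset.sum_const, nsmul_eq_mul]

lemma count_main (m : ℕ) (hm : 1 ≤ m) :
    2 * ((Finset.Icc 1 (2*m)).powerset.filter
        (fun t => 1 ∈ t ∧ 2 ∈ t ∧ m + 1 ≤ t.card)).card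
      = 2 ^ (2*m - 2) + (2*m - 2).choose (m - 1) := by
  classical
  have hbij : ((Finset.Icc 1 (2*m)).powerset.filter
        (fun t => 1 ∈ t ∧ 2 ∈ t ∧ m + 1 ≤ t.card)).card
      = ((Finset.Icc 3 (2*m)).powerset.filter (fun u => m - 1 ≤ u.card)).card := by
    apply Finset.card_nbij' (fun t => (t.erase 1).erase 2) (fun u => insert 1 (insert 2 u))
    · intro t ht
      simp only [Finset.mem_coe, Finset.mem_filter, Finset.mem_powerset] at ht ⊢
      obtain ⟨hsub, h1, h2, hcard⟩ := ht
      constructor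
      · intro j hj
        simp only [Finset.mem_erase] at hj
        have := hsub hj.2.2
        simp only [Finset.mem_Icc] at this ⊢
        omega
      · rw [Finset.card_erase_of_mem (by simp [Finset.mem_erase, h2]),
            Finset.card_erase_of_mem h1]
        omega
    · intro u hu
      simp only [Finset.mem_coe, Finset.mem_filter, Finset.mem_powerset] at hu ⊢
      obtain ⟨hsub, hcard⟩ := hu
      have h1u : 1 ∉ u := fun h => by have := hsub h; rw [Finset.mem_Icc] at this; omega
      have h2u : 2 ∉ u := fun h => by have := hsub h; rw [Finset.mem_Icc] at this; omega
      refine ⟨?_, by simp, by simp, ?_⟩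
      · intro j hj
        simp only [Finset.mem_insert] at hj
        simp only [Finset.mem_Icc]
        rcases hj with rfl | rfl | hj
        · omega
        · omega
        · have := hsub hj; simp only [Finset.mem_Icc] at this; omega
      · rw [Finset.card_insert_of_notMem (by simp [h1u]),
            Finset.card_insert_of_notMem h2u]
        omega
    · intro t ht
      simp only [Finset.mem_coe, Finset.mem_filter, Finset.mem_powerset] at ht
      obtain ⟨hsub, h1, h2, hcard⟩ := ht
      beta_reduce
      rw [Finset.insert_erase (Finset.mem_erase.mpr ⟨by omega, h2⟩),
          Finset.insert_erase h1]
    · intro u hu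
      simp only [Finset.mem_coe, Finset.mem_filter, Finset.mem_powerset] at hu
      obtain ⟨hsub, hcard⟩ := hu
      have h1u : 1 ∉ u := fun h => by have := hsub h; rw [Finset.mem_Icc] at this; omega
      have h2u : 2 ∉ u := fun h => by have := hsub h; rw [Finset.mem_Icc] at this; omega
      beta_reduce
      rw [Finset.erase_insert (by simp [h1u]), Finset.erase_insert h2u]
  rw [hbij]
  have hcard3 : (Finset.Icc 3 (2*m)).card = 2*m - 2 := by
    rw [Nat.card_Icc]; omega
  have hsplit : (Finset.Icc 3 (2*m)).powerset.filter (fun u => m - 1 ≤ u.card)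
      = (Finset.Icc (m-1) (2*m-2)).biUnion (fun k => (Finset.Icc 3 (2*m)).powersetCard k) := by
    ext u
    simp only [Finset.mem_filter, Finset.mem_powerset, Finset.mem_biUnion, Finset.mem_Icc,
      Finset.mem_powersetCard]
    constructor
    · rintro ⟨hsub, hc⟩
      have := Finset.card_le_card hsub
      rw [hcard3] at this
      exact ⟨u.card, ⟨hc, this⟩, hsub, rfl⟩
    · rintro ⟨k, ⟨hk1, hk2⟩, hsub, rfl⟩
      exact ⟨hsub, hk1⟩
  rw [hsplit, Finset.card_biUnion]
  · rw [Finset.sum_congr rfl (fun k _ => ?_)]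
    · exact sum_choose_half m hm
    · rw [Finset.card_powersetCard, hcard3]
  · intro k hk k' hk' hne
    simp only [Function.onFun, Finset.disjoint_left]
    intro u hu hu'
    rw [Finset.mem_powersetCard] at hu hu'
    exact hne (hu.2 ▸ hu'.2 ▸ rfl)
open MeasureTheory ProbabilityTheory

/-- For the CPDO net capital driven by i.i.d. fair signs with `δ = 0.01`:
the conditioning event `{X 2 < 0}` has probability `1/4 > 0`, and for every `1 ≤ m ≤ 199`,
`P(X (2m) < 0 | X 2 < 0) = 1/2 + (1/2^(2m-1)) · C(2m-2, m-1)`. -/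
theorem cpdo_even_loss_given_second_loss
    {Ω : Type*} [MeasureSpace Ω] [IsProbabilityMeasure (ℙ : Measure Ω)]
    (δ : ℝ) (hδ : δ = 0.01)
    (C : ℕ → Ω → ℝ)
    (hMeas : ∀ j, Measurable (C j))
    (hIndep : iIndepFun C ℙ)
    (hHead : ∀ j, ℙ {ω | C j ω = 1} = 1/2)
    (hTail : ∀ j, ℙ {ω | C j ω = -1} = 1/2)
    (X : ℕ → Ω → ℝ)
    (hX : ∀ (k : ℕ) (ω : Ω), X k ω = 1 - ∏ j ∈ Finset.Icc 1 k, (1 - δ * C j ω)) :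
    ℙ {ω | X 2 ω < 0} = 1/4 ∧
    ∀ m : ℕ, 1 ≤ m → m ≤ 199 →
      (ℙ[|{ω | X 2 ω < 0}] {ω | X (2 * m) ω < 0}).toReal
        = 1 / 2 + (1 / 2 ^ (2 * m - 1)) * (Nat.choose (2 * m - 2) (m - 1) : ℝ) := by
  classical
  -- measurability
  have hXm : ∀ k, Measurable (X k) := by
    intro k
    have hfe : X k = fun ω => 1 - ∏ j ∈ Finset.Icc 1 k, (1 - δ * C j ω) :=
      funext (hX k)
    rw [hfe]
    exact measurable_const.sub
      (Finset.measurable_prod _ (fun j _ => measurable_const.sub ((hMeas j).const_mul δ)))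
  have hAms : MeasurableSet {ω | X 2 ω < 0} :=
    measurableSet_lt (hXm 2) measurable_const
  -- the X 2 criterion
  have hX2c : ∀ ω, (C 1 ω = 1 ∨ C 1 ω = -1) → (C 2 ω = 1 ∨ C 2 ω = -1) →
      (X 2 ω < 0 ↔ (C 1 ω = -1 ∧ C 2 ω = -1)) := by
    intro ω h1 h2
    rw [hX]
    have hI : Finset.Icc 1 2 = ({1, 2} : Finset ℕ) := by decide
    rw [hI, Finset.prod_insert (by decide), Finset.prod_singleton]
    rcases h1 with h1 | h1 <;> rcases h2 with h2 | h2 <;> rw [h1, h2] <;> norm_num [hδ]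
  -- the product formula
  have hprod : ∀ (s : Finset ℕ) (ω : Ω), (∀ j ∈ s, C j ω = 1 ∨ C j ω = -1) →
      ∏ j ∈ s, (1 - δ * C j ω)
        = (1.01 : ℝ) ^ (s.filter (fun j => C j ω = -1)).card
          * (0.99 : ℝ) ^ (s.card - (s.filter (fun j => C j ω = -1)).card) := by
    intro s ω hgood
    rw [← Finset.prod_filter_mul_prod_filter_not s (fun j => C j ω = -1)]
    congr 1
    · rw [Finset.prod_congr rfl (fun j hj => ?_), Finset.prod_const]
      have := (Finset.mem_filter.mp hj).2
      rw [this, hδ]; norm_num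
    · rw [Finset.prod_congr rfl (fun j hj => ?_), Finset.prod_const]
      · congr 1
        have := Finset.card_filter_add_card_filter_not
          (s := s) (p := fun j => C j ω = -1)
        omega
      · obtain ⟨hjs, hne⟩ := Finset.mem_filter.mp hj
        have := (hgood j hjs).resolve_right hne
        rw [this, hδ]; norm_num
  -- part 1
  have hPA : ℙ {ω | X 2 ω < 0} = 1/4 := by
    have hpp := pattern_prob C hMeas hIndep hHead hTail (Finset.Icc 1 2)
      {ω | X 2 ω < 0} (fun t => 1 ∈ t ∧ 2 ∈ t) ?_
    · rw [hpp]
      have hc1 : ((Finset.Icc 1 2).powerset.filter (fun t => 1 ∈ t ∧ 2 ∈ t)).card = 1 := by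
        decide
      have hc2 : (Finset.Icc 1 2).card = 2 := by decide
      rw [hc1, hc2, Nat.cast_one, one_mul, one_div, one_div, ← ENNReal.inv_pow]
      norm_num
    · intro ω hgood
      rw [Set.mem_setOf_eq,
        hX2c ω (hgood 1 (by decide)) (hgood 2 (by decide))]
      simp only [Finset.mem_filter]
      constructor
      · rintro ⟨hA, hB⟩
        exact ⟨⟨by decide, hA⟩, ⟨by decide, hB⟩⟩
      · rintro ⟨⟨-, hA⟩, ⟨-, hB⟩⟩
        exact ⟨hA, hB⟩
  refine ⟨hPA, ?_⟩
  intro m hm1 hm199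
  -- the X (2m) criterion
  have hXkey : ∀ ω, (∀ j ∈ Finset.Icc 1 (2*m), C j ω = 1 ∨ C j ω = -1) →
      (X (2*m) ω < 0 ↔
        m + 1 ≤ ((Finset.Icc 1 (2*m)).filter (fun j => C j ω = -1)).card) := by
    intro ω hgood
    rw [hX]
    have h1 : (1 : ℝ) - ∏ j ∈ Finset.Icc 1 (2*m), (1 - δ * C j ω) < 0 ↔
        1 < ∏ j ∈ Finset.Icc 1 (2*m), (1 - δ * C j ω) := by
      constructor <;> intro <;> linarith
    rw [h1, hprod _ ω hgood]
    have hcard : (Finset.Icc 1 (2*m)).card = 2*m := by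
      rw [Nat.card_Icc]; omega
    have hle : ((Finset.Icc 1 (2*m)).filter (fun j => C j ω = -1)).card ≤ 2*m :=
      le_trans (Finset.card_filter_le _ _) (le_of_eq hcard)
    rw [hcard]
    exact real_key m _ _ hm199 (by omega)
  -- joint probability
  set N := ((Finset.Icc 1 (2*m)).powerset.filter
      (fun t => 1 ∈ t ∧ 2 ∈ t ∧ m + 1 ≤ t.card)).card with hNdef
  have hPAB : ℙ ({ω | X 2 ω < 0} ∩ {ω | X (2*m) ω < 0})
      = (N : ENNReal) * (1/2 : ENNReal) ^ (2*m) := by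
    have hpp := pattern_prob C hMeas hIndep hHead hTail (Finset.Icc 1 (2*m))
      ({ω | X 2 ω < 0} ∩ {ω | X (2*m) ω < 0})
      (fun t => 1 ∈ t ∧ 2 ∈ t ∧ m + 1 ≤ t.card) ?_
    · rw [hpp]
      have hcard : (Finset.Icc 1 (2*m)).card = 2*m := by rw [Nat.card_Icc]; omega
      rw [hcard]
    · intro ω hgood
      have h1m : (1:ℕ) ∈ Finset.Icc 1 (2*m) := by
        rw [Finset.mem_Icc]; omega
      have h2m : (2:ℕ) ∈ Finset.Icc 1 (2*m) := by
        rw [Finset.mem_Icc]; omega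
      rw [Set.mem_inter_iff, Set.mem_setOf_eq, Set.mem_setOf_eq,
        hX2c ω (hgood 1 h1m) (hgood 2 h2m), hXkey ω hgood]
      simp only [Finset.mem_filter]
      constructor
      · rintro ⟨⟨hA, hB⟩, hc⟩
        exact ⟨⟨h1m, hA⟩, ⟨h2m, hB⟩, hc⟩
      · rintro ⟨⟨-, hA⟩, ⟨-, hB⟩, hc⟩
        exact ⟨⟨hA, hB⟩, hc⟩
  have hN : 2 * N = 2 ^ (2*m - 2) + (2*m - 2).choose (m - 1) := count_main m hm1
  -- final computation
  rw [cond_apply hAms ℙ, hPA, hPAB]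
  obtain ⟨n, hn⟩ : ∃ n, 2*m = n + 2 := ⟨2*m - 2, by omega⟩
  have e2 : 2*m - 2 = n := by omega
  rw [e2] at hN
  rw [hn]
  have e1' : n + 2 - 1 = n + 1 := by omega
  have e2' : n + 2 - 2 = n := by omega
  rw [e1', e2']
  rw [ENNReal.toReal_mul, ENNReal.toReal_mul, ENNReal.toReal_pow]
  have t1 : ((1/4 : ENNReal)⁻¹).toReal = 4 := by norm_num
  have t2 : ((1/2 : ENNReal)).toReal = 1/2 := by norm_num
  have t3 : ((N : ENNReal)).toReal = (N : ℝ) := by simp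
  rw [t1, t2, t3]
  have hNR : (2:ℝ) * N = 2 ^ n + (n.choose (m - 1) : ℝ) := by
    exact_mod_cast hN
  have h2n : (0:ℝ) < 2 ^ n := by positivity
  have key : (2:ℝ) * N * 2 ^ n = (2 ^ n + (n.choose (m - 1) : ℝ)) * 2 ^ n := by
    rw [hNR]
  have p1 : ((1:ℝ)/2)^(n+2) = 1/(2^n*4) := by
    rw [div_pow, one_pow, pow_add]; norm_num
  have p2 : (2:ℝ)^(n+1) = 2^n*2 := by rw [pow_succ]
  rw [p1, p2]
  field_simp
  ring_nf
  ring_nf at key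
  linarith [key]
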